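/- Let G be sofic and H amenable. Then the unrestricted wreath product G ≀≀ H = (∏_{h∈H} G) ⋊ H is sofic. -/

import Mathlib

/-- Normalized Hamming distance on the symmetric group of a finite set. -/
noncomputable def hamDist {F : Type*} [Fintype F] (α β : Equiv.Perm F) : ℝ :=
  (Nat.card {f : F // α f ≠ β f} : ℝ) / (Fintype.card F : ℝ)

/-- A group is sofic if every finite subset admits `(K,ε)`-approximations into
finite symmetric groups with the normalized Hamming distance. -/
def IsSofic (G : Type*) [Group G] : Prop :=
  ∀ (K : Finset G) (ε : ℝ), 0 < ε →
    ∃ (F : Type) (_ : Fintype F) (_ : Nonempty F) (φ : G → Equiv.Perm F),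
      (∀ k₁ ∈ K, ∀ k₂ ∈ K, hamDist (φ (k₁ * k₂)) (φ k₁ * φ k₂) ≤ ε) ∧
      (∀ k₁ ∈ K, ∀ k₂ ∈ K, k₁ ≠ k₂ → 1 - ε ≤ hamDist (φ k₁) (φ k₂))

/-- Amenability via Følner sets: for every finite `S ⊆ G` and `ε > 0` there is a
nonempty finite `F ⊆ G` with `|F \ sF| < ε|F|` for all `s ∈ S`. -/
def IsAmenableFolner (G : Type*) [Group G] [DecidableEq G] : Prop :=
  ∀ (S : Finset G) (ε : ℝ), 0 < ε →
    ∃ F : Finset G, F.Nonempty ∧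
      ∀ s ∈ S, ((F \ F.image (s * ·)).card : ℝ) < ε * F.card

/-- The unrestricted wreath product `G ≀≀ H = (∏_{h∈H} G) ⋊ H`. -/
def Wr (G H : Type*) [Group G] [Group H] := (H → G) × H

namespace Wr

variable {G H : Type*} [Group G] [Group H]

/-- First (non-homomorphic) projection `G ≀≀ H → ∏_{h∈H} G`. -/
def fst (a : Wr G H) : H → G := a.1

/-- Second projection `G ≀≀ H → H`. -/
def snd (a : Wr G H) : H := a.2

instance instGroup : Group (Wr G H) where
  mul a b := (fun x => a.1 (b.2 * x) * b.1 x, a.2 * b.2)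
  one := (1, 1)
  inv a := (fun x => (a.1 (a.2⁻¹ * x))⁻¹, a.2⁻¹)
  mul_assoc a b c := by
    refine Prod.ext ?_ ?_
    · funext x
      show a.1 (b.2 * (c.2 * x)) * b.1 (c.2 * x) * c.1 x
          = a.1 (b.2 * c.2 * x) * (b.1 (c.2 * x) * c.1 x)
      rw [mul_assoc, mul_assoc]
    · exact mul_assoc a.2 b.2 c.2
  one_mul a := by
    refine Prod.ext ?_ ?_
    · funext x
      show (1 : H → G) (a.2 * x) * a.1 x = a.1 x
      simp
    · exact one_mul a.2
  mul_one a := by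
    refine Prod.ext ?_ ?_
    · funext x
      show a.1 ((1 : H) * x) * (1 : H → G) x = a.1 x
      simp
    · exact mul_one a.2
  inv_mul_cancel a := by
    refine Prod.ext ?_ ?_
    · funext x
      show (a.1 (a.2⁻¹ * (a.2 * x)))⁻¹ * a.1 x = (1 : H → G) x
      simp [← mul_assoc]
    · exact inv_mul_cancel a.2

@[simp] theorem mul_def (a b : Wr G H) :
    a * b = (fun x => a.1 (b.2 * x) * b.1 x, a.2 * b.2) := rfl

end Wr



open Finset Equiv

section Aux
variable {V : Type*} [Fintype V]

lemma hamDist_eq (α β : Equiv.Perm V) [DecidableEq V] :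
    hamDist α β = ((univ.filter fun v => α v ≠ β v).card : ℝ) / (Fintype.card V : ℝ) := by
  rw [hamDist, Nat.card_eq_fintype_card, Fintype.card_subtype]

lemma permCongr_mul {W : Type*} (e : V ≃ W) (α β : Equiv.Perm V) :
    e.permCongr (α * β) = e.permCongr α * e.permCongr β := by
  ext w
  simp [Equiv.permCongr_apply]

lemma hamDist_permCongr {W : Type*} [Fintype W] (e : V ≃ W) (α β : Equiv.Perm V) :
    hamDist (e.permCongr α) (e.permCongr β) = hamDist α β := by
  unfold hamDist
  rw [Fintype.card_congr e.symm]
  congr 1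
  refine congrArg _ (Nat.card_congr ((e.symm.subtypeEquiv fun w => ?_)))
  simp only [Equiv.permCongr_apply, ne_eq, not_iff_not]
  exact e.apply_eq_iff_eq

end Aux

section Count

variable {T A : Type*} [Fintype T] [DecidableEq T] [Fintype A] [DecidableEq A]

lemma card_eval (y : T) (B : Finset A) :
    (univ.filter fun ω : T → A => ω y ∈ B).card * Fintype.card A
      = B.card * Fintype.card (T → A) := by
  classical
  have h1 : (univ.filter fun ω : T → A => ω y ∈ B).card
      = Fintype.card {ω : T → A // ω y ∈ B} := (Fintype.card_subtype _).symm
  have e : {ω : T → A // ω y ∈ B} ≃ {p : A × ({ j // j ≠ y } → A) // p.1 ∈ B} :=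
    (Equiv.funSplitAt y A).subtypeEquiv (fun ω => by simp [Equiv.funSplitAt, Equiv.piSplitAt])
  have h2 : Fintype.card {p : A × ({ j // j ≠ y } → A) // p.1 ∈ B}
      = B.card * Fintype.card ({ j // j ≠ y } → A) := by
    rw [Fintype.card_subtype]
    have : (univ.filter fun p : A × ({ j // j ≠ y } → A) => p.1 ∈ B) = B ×ˢ univ := by
      ext p; simp
    rw [this, Finset.card_product, Finset.card_univ]
  have h3 : Fintype.card (T → A) = Fintype.card A * Fintype.card ({ j // j ≠ y } → A) := by
    rw [Fintype.card_congr (Equiv.funSplitAt y A), Fintype.card_prod]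
  rw [h1, Fintype.card_congr e, h2, h3]
  ring

lemma card_prod_filter {F : Type*} [Fintype F] [DecidableEq F] {Ω : Type*} [Fintype Ω]
    (P : F → Ω → Prop) [∀ f, DecidablePred (P f)] :
    (univ.filter fun v : F × Ω => P v.1 v.2).card = ∑ f : F, (univ.filter (P f)).card := by
  classical
  have h1 : (univ.filter fun v : F × Ω => P v.1 v.2).card
      = Fintype.card {v : F × Ω // P v.1 v.2} := (Fintype.card_subtype _).symm
  rw [h1, Fintype.card_congr (Equiv.subtypeProdEquivSigmaSubtype P), Fintype.card_sigma]
  congr 1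
  funext f
  exact Fintype.card_subtype _

end Count

section Main
set_option linter.unusedSectionVars false

lemma hamDist_one_sub {V : Type*} [Fintype V] [Nonempty V] [DecidableEq V]
    (α β : Equiv.Perm V) :
    hamDist α β = 1 - ((univ.filter fun v => α v = β v).card : ℝ) / (Fintype.card V : ℝ) := by
  have hV : (0:ℝ) < Fintype.card V := by exact_mod_cast Fintype.card_pos
  have hco : (univ.filter fun v => α v ≠ β v) = univ \ (univ.filter fun v => α v = β v) := by
    ext v; simp
  have hle : (univ.filter fun v => α v = β v).card ≤ Fintype.card V :=
    le_trans (Finset.card_filter_le _ _) (le_of_eq Finset.card_univ)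
  rw [hamDist_eq, hco, Finset.card_sdiff_of_subset (Finset.filter_subset _ _), Finset.card_univ,
    Nat.cast_sub hle]
  field_simp

variable {F T A : Type*} [Fintype F] [DecidableEq F] [Fintype T] [DecidableEq T]
  [Fintype A] [DecidableEq A] [Nonempty F] [Nonempty A]

private lemma cardp_prod (p : F → Prop) [DecidablePred p] :
    (univ.filter fun v : F × (T → A) => p v.1).card
      = (univ.filter p).card * Fintype.card (T → A) := by
  classical
  rw [card_prod_filter (fun f (_ : T → A) => p f)]
  have h : ∀ f, (univ.filter (fun _ : T → A => p f)).card
      = if p f then Fintype.card (T → A) else 0 := by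
    intro f
    by_cases h : p f <;> simp [h, Finset.card_univ]
  simp_rw [h]
  rw [Finset.sum_ite, Finset.sum_const, Finset.sum_const_zero, add_zero, smul_eq_mul]


private lemma card_coord_le (y : T) (B : F → Finset A) {m : ℝ}
    (hm : ∀ f, ((B f).card : ℝ) ≤ m * Fintype.card A) :
    ((univ.filter fun v : F × (T → A) => v.2 y ∈ B v.1).card : ℝ)
      ≤ Fintype.card F * (m * Fintype.card (T → A)) := by
  classical
  have hA : (0:ℝ) < Fintype.card A := by exact_mod_cast Fintype.card_pos
  rw [card_prod_filter (fun f (ω : T → A) => ω y ∈ B f)]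
  push_cast
  have key : ∀ f : F, ((univ.filter fun ω : T → A => ω y ∈ B f).card : ℝ)
      ≤ m * Fintype.card (T → A) := by
    intro f
    have h := card_eval y (B f)
    have h' : ((univ.filter fun ω : T → A => ω y ∈ B f).card : ℝ) * Fintype.card A
        = (B f).card * Fintype.card (T → A) := by exact_mod_cast congrArg Nat.cast h
    have hTA : (0:ℝ) ≤ (Fintype.card (T → A) : ℝ) := by positivity
    rw [← mul_le_mul_iff_of_pos_right hA, h']
    calc ((B f).card : ℝ) * Fintype.card (T → A)
        ≤ m * Fintype.card A * Fintype.card (T → A) :=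
          mul_le_mul_of_nonneg_right (hm f) hTA
      _ = m * Fintype.card (T → A) * Fintype.card A := by ring
  calc (∑ f : F, ((univ.filter fun ω : T → A => ω y ∈ B f).card : ℝ))
      ≤ ∑ _f : F, m * Fintype.card (T → A) := Finset.sum_le_sum (fun f _ => key f)
    _ = Fintype.card F * (m * Fintype.card (T → A)) := by
        rw [Finset.sum_const, Finset.card_univ, nsmul_eq_mul]

lemma hamDist_le_bound (α β : Equiv.Perm (F × (T → A))) (p : F → Prop) [DecidablePred p]
    (B : F → T → Finset A) {m : ℝ} (hm0 : 0 ≤ m)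
    (hgood : ∀ f ω, ¬ p f → (∀ y, ω y ∉ B f y) → α (f, ω) = β (f, ω))
    (hm : ∀ f y, ((B f y).card : ℝ) ≤ m * Fintype.card A) :
    hamDist α β ≤ ((univ.filter p).card : ℝ) / Fintype.card F + Fintype.card T * m := by
  classical
  have hF : (0:ℝ) < Fintype.card F := by exact_mod_cast Fintype.card_pos
  have hTA : (0:ℝ) < Fintype.card (T → A) := by exact_mod_cast Fintype.card_pos
  rw [hamDist_eq]
  have hsub : (univ.filter fun v : F × (T → A) => α v ≠ β v)
      ⊆ (univ.filter fun v : F × (T → A) => p v.1)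
        ∪ univ.biUnion (fun y : T => univ.filter fun v : F × (T → A) => v.2 y ∈ B v.1 y) := by
    intro v hv
    simp only [Finset.mem_filter, Finset.mem_univ, true_and] at hv
    by_contra hc
    simp only [Finset.mem_union, Finset.mem_filter, Finset.mem_biUnion, Finset.mem_univ,
      true_and, not_or, not_exists] at hc
    exact hv (hgood v.1 v.2 hc.1 hc.2)
  have hcard : ((univ.filter fun v : F × (T → A) => α v ≠ β v).card : ℝ)
      ≤ ((univ.filter p).card : ℝ) * Fintype.card (T → A)
        + Fintype.card T * (Fintype.card F * (m * Fintype.card (T → A))) := by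
    have h1 := Finset.card_le_card hsub
    have h2 := Finset.card_union_le
      (univ.filter fun v : F × (T → A) => p v.1)
      (univ.biUnion (fun y : T => univ.filter fun v : F × (T → A) => v.2 y ∈ B v.1 y))
    have h3 := Finset.card_biUnion_le (s := (univ : Finset T))
      (t := fun y : T => univ.filter fun v : F × (T → A) => v.2 y ∈ B v.1 y)
    have h4 : ((univ.filter fun v : F × (T → A) => p v.1).card : ℝ)
        = ((univ.filter p).card : ℝ) * Fintype.card (T → A) := by
      exact_mod_cast congrArg Nat.cast (cardp_prod (T := T) (A := A) p)
    have h5 : ((∑ y : T, (univ.filter fun v : F × (T → A) => v.2 y ∈ B v.1 y).card : ℕ) : ℝ)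
        ≤ Fintype.card T * (Fintype.card F * (m * Fintype.card (T → A))) := by
      push_cast
      calc (∑ y : T, ((univ.filter fun v : F × (T → A) => v.2 y ∈ B v.1 y).card : ℝ))
          ≤ ∑ _y : T, Fintype.card F * (m * Fintype.card (T → A)) :=
            Finset.sum_le_sum (fun y _ => card_coord_le y (fun f => B f y) (fun f => hm f y))
        _ = Fintype.card T * (Fintype.card F * (m * Fintype.card (T → A))) := by
            rw [Finset.sum_const, Finset.card_univ, nsmul_eq_mul]
    have := le_trans h1 h2
    have hN : ((univ.filter fun v : F × (T → A) => α v ≠ β v).card : ℝ)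
        ≤ ((univ.filter fun v : F × (T → A) => p v.1).card : ℝ)
          + ((∑ y : T, (univ.filter fun v : F × (T → A) => v.2 y ∈ B v.1 y).card : ℕ) : ℝ) := by
      exact_mod_cast le_trans this (Nat.add_le_add_left h3 _)
    calc ((univ.filter fun v : F × (T → A) => α v ≠ β v).card : ℝ)
        ≤ _ + _ := hN
      _ ≤ _ := by rw [h4]; exact add_le_add_right h5 _
  have hVcard : (Fintype.card (F × (T → A)) : ℝ)
      = (Fintype.card F : ℝ) * Fintype.card (T → A) := by
    rw [Fintype.card_prod]; push_cast; ring
  rw [hVcard, div_le_iff₀ (by positivity)]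
  calc ((univ.filter fun v : F × (T → A) => α v ≠ β v).card : ℝ)
      ≤ _ := hcard
    _ = (((univ.filter p).card : ℝ) / Fintype.card F + Fintype.card T * m)
        * ((Fintype.card F : ℝ) * Fintype.card (T → A)) := by field_simp

lemma hamDist_ge_boundF (α β : Equiv.Perm (F × (T → A))) (p : F → Prop) [DecidablePred p]
    (h : ∀ f ω, α (f, ω) = β (f, ω) → p f) :
    1 - ((univ.filter p).card : ℝ) / Fintype.card F ≤ hamDist α β := by
  classical
  have hF : (0:ℝ) < Fintype.card F := by exact_mod_cast Fintype.card_pos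
  have hTA : (0:ℝ) < Fintype.card (T → A) := by exact_mod_cast Fintype.card_pos
  rw [hamDist_one_sub]
  have hsub : (univ.filter fun v : F × (T → A) => α v = β v)
      ⊆ univ.filter fun v : F × (T → A) => p v.1 := by
    intro v hv
    simp only [Finset.mem_filter, Finset.mem_univ, true_and] at hv ⊢
    exact h v.1 v.2 hv
  have h4 : ((univ.filter fun v : F × (T → A) => p v.1).card : ℝ)
      = ((univ.filter p).card : ℝ) * Fintype.card (T → A) := by
    exact_mod_cast congrArg Nat.cast (cardp_prod (T := T) (A := A) p)
  have hE : ((univ.filter fun v : F × (T → A) => α v = β v).card : ℝ)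
      ≤ ((univ.filter p).card : ℝ) * Fintype.card (T → A) := by
    rw [← h4]; exact_mod_cast Finset.card_le_card hsub
  have hVcard : (Fintype.card (F × (T → A)) : ℝ)
      = (Fintype.card F : ℝ) * Fintype.card (T → A) := by
    rw [Fintype.card_prod]; push_cast; ring
  rw [hVcard]
  have : ((univ.filter fun v : F × (T → A) => α v = β v).card : ℝ)
      / ((Fintype.card F : ℝ) * Fintype.card (T → A))
      ≤ ((univ.filter p).card : ℝ) / Fintype.card F := by
    rw [div_le_div_iff₀ (by positivity) hF]
    calc ((univ.filter fun v : F × (T → A) => α v = β v).card : ℝ) * Fintype.card F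
        ≤ ((univ.filter p).card : ℝ) * Fintype.card (T → A) * Fintype.card F :=
          mul_le_mul_of_nonneg_right hE hF.le
      _ = ((univ.filter p).card : ℝ) * ((Fintype.card F : ℝ) * Fintype.card (T → A)) := by ring
  linarith

lemma hamDist_ge_boundA (α β : Equiv.Perm (F × (T → A))) (y : F → T) (B : F → Finset A)
    {m : ℝ} (h : ∀ f ω, α (f, ω) = β (f, ω) → ω (y f) ∈ B f)
    (hm : ∀ f, ((B f).card : ℝ) ≤ m * Fintype.card A) :
    1 - m ≤ hamDist α β := by
  classical
  have hF : (0:ℝ) < Fintype.card F := by exact_mod_cast Fintype.card_pos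
  have hTA : (0:ℝ) < Fintype.card (T → A) := by exact_mod_cast Fintype.card_pos
  rw [hamDist_one_sub]
  have hsub : (univ.filter fun v : F × (T → A) => α v = β v)
      ⊆ univ.filter fun v : F × (T → A) => v.2 (y v.1) ∈ B v.1 := by
    intro v hv
    simp only [Finset.mem_filter, Finset.mem_univ, true_and] at hv ⊢
    exact h v.1 v.2 hv
  have hE : ((univ.filter fun v : F × (T → A) => α v = β v).card : ℝ)
      ≤ (∑ f : F, ((univ.filter fun ω : T → A => ω (y f) ∈ B f).card : ℝ)) := by
    have h1 : ((univ.filter fun v : F × (T → A) => α v = β v).card : ℝ)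
        ≤ ((univ.filter fun v : F × (T → A) => v.2 (y v.1) ∈ B v.1).card : ℝ) := by
      exact_mod_cast Finset.card_le_card hsub
    refine le_trans h1 ?_
    rw [card_prod_filter (fun f (ω : T → A) => ω (y f) ∈ B f)]
    push_cast
    exact le_refl _
  have key : ∀ f : F, ((univ.filter fun ω : T → A => ω (y f) ∈ B f).card : ℝ)
      ≤ m * Fintype.card (T → A) := by
    intro f
    have hA : (0:ℝ) < Fintype.card A := by exact_mod_cast Fintype.card_pos
    have h' : ((univ.filter fun ω : T → A => ω (y f) ∈ B f).card : ℝ) * Fintype.card A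
        = (B f).card * Fintype.card (T → A) := by
      exact_mod_cast congrArg Nat.cast (card_eval (y f) (B f))
    rw [← mul_le_mul_iff_of_pos_right hA, h']
    calc ((B f).card : ℝ) * Fintype.card (T → A)
        ≤ m * Fintype.card A * Fintype.card (T → A) :=
          mul_le_mul_of_nonneg_right (hm f) hTA.le
      _ = m * Fintype.card (T → A) * Fintype.card A := by ring
  have hE2 : ((univ.filter fun v : F × (T → A) => α v = β v).card : ℝ)
      ≤ Fintype.card F * (m * Fintype.card (T → A)) := by
    refine le_trans hE ?_
    calc (∑ f : F, ((univ.filter fun ω : T → A => ω (y f) ∈ B f).card : ℝ))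
        ≤ ∑ _f : F, m * Fintype.card (T → A) := Finset.sum_le_sum (fun f _ => key f)
      _ = Fintype.card F * (m * Fintype.card (T → A)) := by
          rw [Finset.sum_const, Finset.card_univ, nsmul_eq_mul]
  have hVcard : (Fintype.card (F × (T → A)) : ℝ)
      = (Fintype.card F : ℝ) * Fintype.card (T → A) := by
    rw [Fintype.card_prod]; push_cast; ring
  rw [hVcard]
  have : ((univ.filter fun v : F × (T → A) => α v = β v).card : ℝ)
      / ((Fintype.card F : ℝ) * Fintype.card (T → A)) ≤ m := by
    rw [div_le_iff₀ (by positivity)]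
    calc ((univ.filter fun v : F × (T → A) => α v = β v).card : ℝ)
        ≤ Fintype.card F * (m * Fintype.card (T → A)) := hE2
      _ = m * ((Fintype.card F : ℝ) * Fintype.card (T → A)) := by ring
  linarith

end Main

lemma exists_sigma {H : Type*} [Group H] [DecidableEq H] (F : Finset H) (h : H) :
    ∃ σ : Equiv.Perm ↥F, ∀ f : ↥F, h * (f : H) ∈ F → ((σ f : ↥F) : H) = h * (f : H) := by
  classical
  let e : {f : ↥F // h * (f : H) ∈ F} ≃ {f : ↥F // h⁻¹ * (f : H) ∈ F} :=
    { toFun := fun x => ⟨⟨h * (x.1 : H), x.2⟩, by simp [inv_mul_cancel_left]⟩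
      invFun := fun x => ⟨⟨h⁻¹ * (x.1 : H), x.2⟩, by simp [mul_inv_cancel_left]⟩
      left_inv := fun x => by ext; simp [inv_mul_cancel_left]
      right_inv := fun x => by ext; simp [mul_inv_cancel_left] }
  have hc : Fintype.card {f : ↥F // ¬ (h * (f : H) ∈ F)}
      = Fintype.card {f : ↥F // ¬ (h⁻¹ * (f : H) ∈ F)} := by
    rw [Fintype.card_subtype_compl, Fintype.card_subtype_compl, Fintype.card_congr e]
  refine ⟨Equiv.subtypeCongr e (Fintype.equivOfCardEq hc), ?_⟩
  intro f hf
  have : (Equiv.subtypeCongr e (Fintype.equivOfCardEq hc)) f = (e ⟨f, hf⟩ : {f : ↥F // h⁻¹ * (f : H) ∈ F}).1 := by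
    unfold Equiv.subtypeCongr
    rw [Equiv.trans_apply, Equiv.trans_apply, (by rw [Equiv.symm_apply_eq]; rfl : (Equiv.sumCompl (fun x : ↥F => h * (x:H) ∈ F)).symm f = Sum.inl ⟨f, hf⟩)]
    simp
  rw [this]
  rfl

section CardFilter
open Finset

lemma card_filter_ne_le {A : Type*} [Fintype A] [Nonempty A] (α β : Equiv.Perm A)
    {d : ℝ} [DecidablePred fun q : A => α q ≠ β q] (h : hamDist α β ≤ d) :
    ((univ.filter fun q : A => α q ≠ β q).card : ℝ) ≤ d * Fintype.card A := by
  have hA : (0:ℝ) < Fintype.card A := by exact_mod_cast Fintype.card_pos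
  have h1 : (univ.filter fun q : A => α q ≠ β q).card = Nat.card {q : A // α q ≠ β q} := by
    rw [Nat.card_eq_fintype_card, Fintype.card_subtype]
  rw [h1]
  have hham : hamDist α β = (Nat.card {q : A // α q ≠ β q} : ℝ) / Fintype.card A := rfl
  rw [hham] at h
  rwa [div_le_iff₀ hA] at h

lemma card_filter_eq_le {A : Type*} [Fintype A] [Nonempty A] (α β : Equiv.Perm A)
    {d : ℝ} [DecidablePred fun q : A => α q = β q] (h : 1 - d ≤ hamDist α β) :
    ((univ.filter fun q : A => α q = β q).card : ℝ) ≤ d * Fintype.card A := by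
  classical
  have hA : (0:ℝ) < Fintype.card A := by exact_mod_cast Fintype.card_pos
  have hcompl := Fintype.card_subtype_compl (fun q : A => α q ≠ β q)
  have h1 : (univ.filter fun q : A => α q = β q).card = Fintype.card {q : A // α q = β q} :=
    (Fintype.card_subtype _).symm
  have h2 : Fintype.card {q : A // α q = β q} = Fintype.card {q : A // ¬ (α q ≠ β q)} :=
    Fintype.card_congr (Equiv.subtypeEquivRight fun q => not_not.symm)
  have hham : hamDist α β = (Nat.card {q : A // α q ≠ β q} : ℝ) / Fintype.card A := rfl
  rw [hham] at h
  have h4 : (1 - d) * Fintype.card A ≤ (Nat.card {q : A // α q ≠ β q} : ℝ) :=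
    (le_div_iff₀ hA).mp h
  have h5 : Fintype.card {q : A // α q ≠ β q} ≤ Fintype.card A := Fintype.card_subtype_le _
  rw [Nat.card_eq_fintype_card] at h4
  rw [h1, h2, hcompl, Nat.cast_sub h5]
  linarith

end CardFilter

set_option maxHeartbeats 2000000 in
open Finset in
/-- Theorem A: the unrestricted wreath product of a sofic group by an amenable
group is sofic. -/
theorem wr_sofic {G H : Type*} [Group G] [Group H] [DecidableEq H]
    (hG : IsSofic G) (hH : IsAmenableFolner H) : IsSofic (Wr G H) := by
  classical
  intro K ε hε
  set S : Finset H := ((K ×ˢ K).image fun p => (p.1.2 * p.2.2)⁻¹) ∪ (K.image fun a => a.2⁻¹)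
    with hS
  obtain ⟨F, hFne, hFol⟩ := hH S (ε/4) (by positivity)
  haveI : Nonempty ↥F := hFne.to_subtype
  have hwitex : ∀ u v : H → G, ∃ x : H, u ≠ v → u x ≠ v x := by
    intro u v
    by_cases h : u = v
    · exact ⟨1, fun hc => absurd h hc⟩
    · obtain ⟨x, hx⟩ := Function.ne_iff.mp h
      exact ⟨x, fun _ => hx⟩
  choose wit hwit using hwitex
  set X : Finset H := (K ×ˢ K).image (fun p => wit p.1.1 p.2.1) with hX
  set T : Finset H := (F ×ˢ X).image (fun p => p.1⁻¹ * p.2) with hT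
  set P : Finset H := ((insert (1:H) (K.image fun a => a.2)) ×ˢ (F ×ˢ T)).image
      (fun q => q.1 * q.2.1 * q.2.2) with hP
  set D : Finset G := (K ×ˢ P).image (fun q => q.1.1 q.2) with hD
  set δ : ℝ := ε / (2 * (T.card + 1)) with hδdef
  have hδ : 0 < δ := by rw [hδdef]; positivity
  have hδexp : 2 * (δ * (T.card : ℝ)) + 2 * δ = ε := by
    rw [hδdef]; field_simp
  have hT0 : (0:ℝ) ≤ (T.card : ℝ) := Nat.cast_nonneg _
  have hδT : (T.card : ℝ) * δ ≤ ε / 2 := by nlinarith [hδ.le]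
  have hδε2 : δ ≤ ε / 2 := by nlinarith [mul_nonneg hδ.le hT0]
  obtain ⟨A, _instA, _instA2, ψ, hψm, hψs⟩ := hG D δ hδ
  choose σ hσ using fun h : H => exists_sigma F h
  set φ : Wr G H → Equiv.Perm (↥F × (↥T → A)) := fun a =>
    (σ a.2).prodShear (fun f => Equiv.piCongrRight (fun y : ↥T => ψ (a.1 ((f : H) * (y : H)))))
    with hφdef
  have hφ : ∀ (a : Wr G H) (f : ↥F) (ω : ↥T → A),
      φ a (f, ω) = (σ a.2 f, fun y : ↥T => ψ (a.1 ((f : H) * (y : H))) (ω y)) := fun a f ω => rfl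
  have hFpos : (0:ℝ) < F.card := by exact_mod_cast Finset.card_pos.mpr hFne
  have hcount : ∀ s : H, s⁻¹ ∈ S →
      ((univ.filter fun f : ↥F => s * (f:H) ∉ F).card : ℝ) ≤ ε/4 * F.card := by
    intro s hs
    have h1 : (univ.filter fun f : ↥F => s * (f:H) ∉ F).card
        = (F.filter fun x => s * x ∉ F).card := by
      refine Finset.card_bij (fun f _ => (f : H)) ?_ ?_ ?_
      · intro f hf
        simp only [Finset.mem_filter, Finset.mem_univ, true_and] at hf
        exact Finset.mem_filter.mpr ⟨f.2, hf⟩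
      · intro f _ g _ hfg
        exact Subtype.ext hfg
      · intro x hx
        simp only [Finset.mem_filter] at hx
        exact ⟨⟨x, hx.1⟩, by simp [hx.2], rfl⟩
    have h2 : (F.filter fun x => s * x ∉ F) = F \ F.image (s⁻¹ * ·) := by
      ext x
      simp only [Finset.mem_filter, Finset.mem_sdiff, Finset.mem_image]
      constructor
      · rintro ⟨hx, hsx⟩
        refine ⟨hx, ?_⟩
        rintro ⟨z, hz, hzx⟩
        apply hsx
        rw [← hzx, mul_inv_cancel_left]
        exact hz
      · rintro ⟨hx, hni⟩
        refine ⟨hx, fun hsx => hni ⟨s * x, hsx, by rw [inv_mul_cancel_left]⟩⟩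
    rw [h1, h2]
    exact (hFol s⁻¹ hs).le
  have hmemD : ∀ k ∈ K, ∀ x ∈ P, (k : Wr G H).1 x ∈ D := by
    intro k hk x hx
    rw [hD]
    exact Finset.mem_image.mpr ⟨(k, x), Finset.mem_product.mpr ⟨hk, hx⟩, rfl⟩
  have hmemP1 : ∀ (f : ↥F) (y : ↥T), (f:H) * (y:H) ∈ P := by
    intro f y
    rw [hP]
    refine Finset.mem_image.mpr ⟨(1, ((f:H), (y:H))), ?_, by rw [one_mul]⟩
    exact Finset.mem_product.mpr ⟨Finset.mem_insert_self _ _,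
      Finset.mem_product.mpr ⟨f.2, y.2⟩⟩
  have hmemP2 : ∀ b ∈ K, ∀ (f : ↥F) (y : ↥T), (b : Wr G H).2 * ((f:H) * (y:H)) ∈ P := by
    intro b hb f y
    rw [hP]
    refine Finset.mem_image.mpr ⟨(b.2, ((f:H), (y:H))), ?_, by rw [mul_assoc]⟩
    refine Finset.mem_product.mpr ⟨?_, Finset.mem_product.mpr ⟨f.2, y.2⟩⟩
    exact Finset.mem_insert.mpr (Or.inr (Finset.mem_image.mpr ⟨b, hb, rfl⟩))
  refine ⟨Fin (Fintype.card (↥F × (↥T → A))), inferInstance,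
    ⟨(Fintype.equivFin _) (Classical.arbitrary _)⟩,
    fun w => (Fintype.equivFin (↥F × (↥T → A))).permCongr (φ w), ?_, ?_⟩
  · -- almost multiplicativity
    intro a ha b hb
    rw [← _root_.permCongr_mul, hamDist_permCongr]
    refine le_trans (hamDist_le_bound (φ (a*b)) (φ a * φ b)
      (fun f : ↥F => ¬ (b.2 * (f:H) ∈ F ∧ (a.2 * b.2) * (f:H) ∈ F))
      (fun f y => univ.filter fun q : A =>
        ψ (a.1 (b.2 * ((f:H) * (y:H))) * b.1 ((f:H) * (y:H))) q
          ≠ (ψ (a.1 (b.2 * ((f:H) * (y:H)))) * ψ (b.1 ((f:H) * (y:H)))) q)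
      hδ.le ?_ ?_) ?_
    · -- hgood
      intro f ω hpf hB
      rw [not_not] at hpf
      obtain ⟨hc1, hc2⟩ := hpf
      have h1 : ((σ b.2 f : ↥F) : H) = b.2 * (f:H) := hσ b.2 f hc1
      have h2m : a.2 * ((σ b.2 f : ↥F) : H) ∈ F := by rw [h1, ← mul_assoc]; exact hc2
      have h2 : ((σ a.2 (σ b.2 f) : ↥F) : H) = a.2 * (b.2 * (f:H)) := by
        rw [hσ a.2 (σ b.2 f) h2m, h1]
      have h3 : ((σ (a.2 * b.2) f : ↥F) : H) = (a.2 * b.2) * (f:H) := hσ (a.2*b.2) f hc2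
      rw [Equiv.Perm.mul_apply, hφ (a*b) f ω, hφ b f ω,
        hφ a (σ b.2 f) (fun y : ↥T => ψ (b.1 ((f:H) * (y:H))) (ω y))]
      refine Prod.ext ?_ ?_
      · show σ (a.2 * b.2) f = σ a.2 (σ b.2 f)
        refine Subtype.ext ?_
        rw [h3, h2]
        exact mul_assoc _ _ _
      · funext y
        have hy := hB y
        simp only [Finset.mem_filter, Finset.mem_univ, true_and, not_not] at hy
        show ψ ((a*b).1 ((f:H) * (y:H))) (ω y)
            = ψ (a.1 (((σ b.2 f : ↥F):H) * (y:H))) (ψ (b.1 ((f:H) * (y:H))) (ω y))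
        have harg : ((σ b.2 f : ↥F):H) * (y:H) = b.2 * ((f:H) * (y:H)) := by
          rw [h1, mul_assoc]
        rw [harg]
        have hab1 : (a*b).1 ((f:H) * (y:H))
            = a.1 (b.2 * ((f:H) * (y:H))) * b.1 ((f:H) * (y:H)) := rfl
        rw [hab1, hy]
        rfl
    · -- hm
      intro f y
      exact card_filter_ne_le _ _
        (hψm _ (hmemD a ha _ (hmemP2 b hb f y)) _ (hmemD b hb _ (hmemP1 f y)))
    · -- numeric bound
      have hp1 : ((univ.filter fun f : ↥F =>
          ¬ (b.2 * (f:H) ∈ F ∧ (a.2 * b.2) * (f:H) ∈ F)).card : ℝ)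
          ≤ ε/4 * F.card + ε/4 * F.card := by
        have hsub : (univ.filter fun f : ↥F => ¬ (b.2 * (f:H) ∈ F ∧ (a.2*b.2) * (f:H) ∈ F))
            ⊆ (univ.filter fun f : ↥F => b.2 * (f:H) ∉ F)
              ∪ (univ.filter fun f : ↥F => (a.2*b.2) * (f:H) ∉ F) := by
          intro f hf
          simp only [Finset.mem_filter, Finset.mem_univ, true_and, not_and_or,
            Finset.mem_union] at hf ⊢
          exact hf
        have hc1 := hcount b.2 (by
          rw [hS]
          exact Finset.mem_union_right _ (Finset.mem_image.mpr ⟨b, hb, rfl⟩))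
        have hc2 := hcount (a.2 * b.2) (by
          rw [hS]
          exact Finset.mem_union_left _
            (Finset.mem_image.mpr ⟨(a, b), Finset.mem_product.mpr ⟨ha, hb⟩, rfl⟩))
        have hcu : ((univ.filter fun f : ↥F =>
            ¬ (b.2 * (f:H) ∈ F ∧ (a.2*b.2) * (f:H) ∈ F)).card : ℝ)
            ≤ ((univ.filter fun f : ↥F => b.2 * (f:H) ∉ F).card : ℝ)
              + ((univ.filter fun f : ↥F => (a.2*b.2) * (f:H) ∉ F).card : ℝ) := by
          have := le_trans (Finset.card_le_card hsub) (Finset.card_union_le _ _)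
          exact_mod_cast this
        linarith
      simp only [Fintype.card_coe]
      have hdivF : ((univ.filter fun f : ↥F =>
          ¬ (b.2 * (f:H) ∈ F ∧ (a.2 * b.2) * (f:H) ∈ F)).card : ℝ) / F.card ≤ ε/2 := by
        rw [div_le_iff₀ hFpos]
        calc ((univ.filter fun f : ↥F =>
            ¬ (b.2 * (f:H) ∈ F ∧ (a.2 * b.2) * (f:H) ∈ F)).card : ℝ)
            ≤ ε/4 * F.card + ε/4 * F.card := hp1
          _ = ε/2 * F.card := by ring
      linarith
  · -- separation
    intro a ha b hb hab
    rw [hamDist_permCongr]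
    by_cases h2eq : a.2 = b.2
    · have h1ne : a.1 ≠ b.1 := fun h1 => hab (Prod.ext h1 h2eq)
      have hx : a.1 (wit a.1 b.1) ≠ b.1 (wit a.1 b.1) := hwit a.1 b.1 h1ne
      have hxX : wit a.1 b.1 ∈ X := by
        rw [hX]
        exact Finset.mem_image.mpr ⟨(a, b), Finset.mem_product.mpr ⟨ha, hb⟩, rfl⟩
      have hxP : wit a.1 b.1 ∈ P := by
        obtain ⟨f₀, hf₀⟩ := hFne
        rw [hP]
        refine Finset.mem_image.mpr ⟨(1, (f₀, f₀⁻¹ * wit a.1 b.1)), ?_, ?_⟩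
        · refine Finset.mem_product.mpr ⟨Finset.mem_insert_self _ _,
            Finset.mem_product.mpr ⟨hf₀, ?_⟩⟩
          rw [hT]
          exact Finset.mem_image.mpr ⟨(f₀, wit a.1 b.1),
            Finset.mem_product.mpr ⟨hf₀, hxX⟩, rfl⟩
        · rw [one_mul, mul_inv_cancel_left]
      have hsep := hψs _ (hmemD a ha _ hxP) _ (hmemD b hb _ hxP) hx
      have hgoal := hamDist_ge_boundA (m := δ) (φ a) (φ b)
        (fun f : ↥F => (⟨(f:H)⁻¹ * wit a.1 b.1, by
          rw [hT]
          exact Finset.mem_image.mpr ⟨((f:H), wit a.1 b.1),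
            Finset.mem_product.mpr ⟨f.2, hxX⟩, rfl⟩⟩ : ↥T))
        (fun _ => univ.filter fun q : A =>
          ψ (a.1 (wit a.1 b.1)) q = ψ (b.1 (wit a.1 b.1)) q)
        ?_ ?_
      · calc 1 - ε ≤ 1 - δ := by linarith
          _ ≤ hamDist (φ a) (φ b) := hgoal
      · intro f ω heq
        rw [hφ a f ω, hφ b f ω] at heq
        simp only [Prod.mk.injEq] at heq
        have hyy := congrFun heq.2 (⟨(f:H)⁻¹ * wit a.1 b.1, by
            rw [hT]
            exact Finset.mem_image.mpr ⟨((f:H), wit a.1 b.1),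
              Finset.mem_product.mpr ⟨f.2, hxX⟩, rfl⟩⟩ : ↥T)
        simp only [mul_inv_cancel_left] at hyy
        exact Finset.mem_filter.mpr ⟨Finset.mem_univ _, hyy⟩
      · intro f
        exact card_filter_eq_le _ _ hsep
    · have hgoal := hamDist_ge_boundF (φ a) (φ b)
        (fun f : ↥F => a.2 * (f:H) ∉ F ∨ b.2 * (f:H) ∉ F) ?_
      · refine le_trans ?_ hgoal
        have hc1 := hcount a.2 (by
          rw [hS]
          exact Finset.mem_union_right _ (Finset.mem_image.mpr ⟨a, ha, rfl⟩))
        have hc2 := hcount b.2 (by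
          rw [hS]
          exact Finset.mem_union_right _ (Finset.mem_image.mpr ⟨b, hb, rfl⟩))
        have hsub : (univ.filter fun f : ↥F => a.2 * (f:H) ∉ F ∨ b.2 * (f:H) ∉ F)
            ⊆ (univ.filter fun f : ↥F => a.2 * (f:H) ∉ F)
              ∪ (univ.filter fun f : ↥F => b.2 * (f:H) ∉ F) := by
          intro f hf
          simp only [Finset.mem_filter, Finset.mem_univ, true_and, Finset.mem_union] at hf ⊢
          exact hf
        have hcu : ((univ.filter fun f : ↥F => a.2 * (f:H) ∉ F ∨ b.2 * (f:H) ∉ F).card : ℝ)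
            ≤ ((univ.filter fun f : ↥F => a.2 * (f:H) ∉ F).card : ℝ)
              + ((univ.filter fun f : ↥F => b.2 * (f:H) ∉ F).card : ℝ) := by
          have := le_trans (Finset.card_le_card hsub) (Finset.card_union_le _ _)
          exact_mod_cast this
        simp only [Fintype.card_coe]
        have hdivF : ((univ.filter fun f : ↥F =>
            a.2 * (f:H) ∉ F ∨ b.2 * (f:H) ∉ F).card : ℝ) / F.card ≤ ε := by
          rw [div_le_iff₀ hFpos]
          calc ((univ.filter fun f : ↥F => a.2 * (f:H) ∉ F ∨ b.2 * (f:H) ∉ F).card : ℝ)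
              ≤ ε/4 * F.card + ε/4 * F.card := by linarith
            _ ≤ ε * F.card := by nlinarith
        linarith
      · intro f ω heq
        by_contra hcon
        push_neg at hcon
        obtain ⟨ha2, hb2⟩ := hcon
        rw [hφ a f ω, hφ b f ω] at heq
        have h1st := congrArg Prod.fst heq
        have hval : a.2 * (f:H) = b.2 * (f:H) := by
          rw [← hσ a.2 f ha2, ← hσ b.2 f hb2]
          exact congrArg Subtype.val h1st
        exact h2eq (mul_right_cancel hval)
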